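/- For natural numbers $j,k$ with $j+k < m$ and $(j,k)$ not giving a convergent integral, the integral $\int_{\mathbb{C}^2\setminus\{0\}} |z_1|^{2j}|z_2|^{2k} \frac{e^{-m|z|^2}}{|z|^{2m}}\left(1+\frac{1}{|z|^2}\right) d\mu(z)$ diverges (equals $+\infty$). -/

import Mathlib

open Real MeasureTheory

lemma simanca_aux (m j k : ℕ) (hm : 1 ≤ m) (h : j + k < m) (q a b : ℝ)
    (hq0 : 0 < q) (hq1 : q ≤ 1) (ha1 : q < a) (ha2 : a ≤ 2*q) (hb1 : q < b) (hb2 : b ≤ 2*q) :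
    Real.exp (-(8*(m:ℝ))) / 8^(m+1) / q^4 ≤
      a^(2*j) * b^(2*k) * (Real.exp (-(m:ℝ) * (a^2+b^2)) / (a^2+b^2)^m)
        * (1 + 1/(a^2+b^2)) := by
  have ha0 : 0 < a := hq0.trans ha1
  have hb0 : 0 < b := hq0.trans hb1
  have hs0 : 0 < a^2 + b^2 := by positivity
  have hs8 : a^2 + b^2 ≤ 8*q^2 := by nlinarith
  have hq2 : q^2 ≤ 1 := by nlinarith
  have hm0 : (0:ℝ) ≤ m := Nat.cast_nonneg m
  calc Real.exp (-(8*(m:ℝ))) / 8^(m+1) / q^4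
      ≤ Real.exp (-(8*(m:ℝ))) / 8^(m+1) * q^(2*(j+k)) / q^(2*m+2) := by
        rw [div_le_div_iff₀ (by positivity) (by positivity)]
        have hp : q^(2*m+2) ≤ q^(2*(j+k)+4) := pow_le_pow_of_le_one hq0.le hq1 (by omega)
        calc Real.exp (-(8*(m:ℝ))) / 8^(m+1) * q^(2*m+2)
            ≤ Real.exp (-(8*(m:ℝ))) / 8^(m+1) * q^(2*(j+k)+4) :=
              mul_le_mul_of_nonneg_left hp (by positivity)
          _ = Real.exp (-(8*(m:ℝ))) / 8^(m+1) * q^(2*(j+k)) * q^4 := by ring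
    _ = q^(2*j) * q^(2*k) * (Real.exp (-(8*(m:ℝ))) / ((8*q^2)^m)) * (1/(8*q^2)) := by
        field_simp
        ring
    _ ≤ a^(2*j) * b^(2*k) * (Real.exp (-(m:ℝ) * (a^2+b^2)) / (a^2+b^2)^m)
          * (1 + 1/(a^2+b^2)) := by
        refine mul_le_mul ?_ ?_ (by positivity) (by positivity)
        · refine mul_le_mul (mul_le_mul ?_ ?_ (by positivity) (by positivity)) ?_
            (by positivity) (by positivity)
          · exact pow_le_pow_left₀ hq0.le ha1.le _
          · exact pow_le_pow_left₀ hq0.le hb1.le _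
          · apply div_le_div₀ (Real.exp_pos _).le
            · apply Real.exp_le_exp.2
              nlinarith [mul_nonneg hm0 (by linarith : (0:ℝ) ≤ 8*q^2 - (a^2+b^2)),
                mul_nonneg hm0 (by linarith : (0:ℝ) ≤ 1 - q^2)]
            · positivity
            · exact pow_le_pow_left₀ hs0.le hs8 _
        · have h1 : (1:ℝ)/(8*q^2) ≤ 1/(a^2+b^2) := one_div_le_one_div_of_le hs0 hs8
          linarith

theorem simanca_low_monomials_divergent (m : ℕ) (hm : 1 ≤ m)
    (j k : ℕ) (h : j + k < m) :
    ∫⁻ z in {p : ℂ × ℂ | p ≠ 0},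
        ENNReal.ofReal (‖z.1‖^(2*j) * ‖z.2‖^(2*k)
          * (Real.exp (-(m:ℝ) * (‖z.1‖^2 + ‖z.2‖^2))
              / (‖z.1‖^2 + ‖z.2‖^2)^m)
          * (1 + 1 / (‖z.1‖^2 + ‖z.2‖^2)))
      = ⊤ := by
  have hπ : 0 < π := Real.pi_pos
  set F : ℂ × ℂ → ENNReal := fun z =>
    ENNReal.ofReal (‖z.1‖^(2*j) * ‖z.2‖^(2*k)
      * (Real.exp (-(m:ℝ) * (‖z.1‖^2 + ‖z.2‖^2))
          / (‖z.1‖^2 + ‖z.2‖^2)^m)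
      * (1 + 1 / (‖z.1‖^2 + ‖z.2‖^2))) with hF
  set c : ℝ := Real.exp (-(8*(m:ℝ))) / 8^(m+1) with hc
  have hc0 : 0 < c := by positivity
  set q : ℕ → ℝ := fun n => (2:ℝ)⁻¹ ^ (n+2) with hqdef
  have hq0 : ∀ n, 0 < q n := fun n => by positivity
  have hq1 : ∀ n, q n ≤ 1 := fun n => by
    calc q n = (2:ℝ)⁻¹ ^ (n+2) := rfl
      _ ≤ (2:ℝ)⁻¹ ^ 0 := pow_le_pow_of_le_one (by norm_num) (by norm_num) (Nat.zero_le _)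
      _ = 1 := pow_zero _
  set B : ℕ → Set ℂ := fun n => Metric.closedBall 0 (2*q n) \ Metric.closedBall 0 (q n)
    with hBdef
  have hmemB : ∀ n w, w ∈ B n ↔ ‖w‖ ≤ 2*q n ∧ q n < ‖w‖ := by
    intro n w
    simp [hBdef, Metric.mem_closedBall, Complex.dist_eq, not_le, Set.mem_diff]
  have hmeasB : ∀ n, MeasurableSet (B n) :=
    fun n => measurableSet_closedBall.diff measurableSet_closedBall
  set A : ℕ → Set (ℂ × ℂ) := fun n => (B n) ×ˢ (B n) with hAdef
  have hmeasA : ∀ n, MeasurableSet (A n) := fun n => (hmeasB n).prod (hmeasB n)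
  have hdisjB : ∀ n l, n < l → Disjoint (B n) (B l) := by
    intro n l hnl
    rw [Set.disjoint_left]
    intro w hwn hwl
    have h1 := (hmemB n w).1 hwn
    have h2 := (hmemB l w).1 hwl
    have hle : q l ≤ (2:ℝ)⁻¹ * q n := by
      calc q l = (2:ℝ)⁻¹ ^ (l+2) := rfl
        _ ≤ (2:ℝ)⁻¹ ^ (n+3) := pow_le_pow_of_le_one (by norm_num) (by norm_num) (by omega)
        _ = (2:ℝ)⁻¹ * q n := by show _ = _ * (2:ℝ)⁻¹^(n+2); ring
    linarith [h1.2, h2.1]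
  have hdisjA : Pairwise (Function.onFun Disjoint A) := by
    intro n l hnl
    have hB : Disjoint (B n) (B l) := by
      rcases lt_or_gt_of_ne hnl with h' | h'
      · exact hdisjB n l h'
      · exact (hdisjB l n h').symm
    rw [Function.onFun, Set.disjoint_left]
    intro z hz1 hz2
    exact (Set.disjoint_left.1 hB) hz1.1 hz2.1
  have hsub : (⋃ n, A n) ⊆ {p : ℂ × ℂ | p ≠ 0} := by
    intro z hz
    rcases Set.mem_iUnion.1 hz with ⟨n, hzn⟩
    have h1 := (hmemB n z.1).1 hzn.1
    simp only [Set.mem_setOf_eq]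
    intro hz0
    rw [hz0] at h1
    simp at h1
    linarith [hq0 n, h1.2]
  have hpi : (NNReal.pi : ENNReal) = ENNReal.ofReal π := by
    rw [← NNReal.coe_real_pi, ENNReal.ofReal_coe_nnreal]
  have hvolB : ∀ n, volume (B n) = ENNReal.ofReal (3*π*(q n)^2) := by
    intro n
    rw [hBdef]
    rw [measure_diff (Metric.closedBall_subset_closedBall (by linarith [hq0 n]))
      measurableSet_closedBall.nullMeasurableSet measure_closedBall_lt_top.ne]
    rw [Complex.volume_closedBall, Complex.volume_closedBall, hpi,
      ← ENNReal.ofReal_pow (by linarith [hq0 n]), ← ENNReal.ofReal_pow (hq0 n).le,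
      ← ENNReal.ofReal_mul (by positivity), ← ENNReal.ofReal_mul (by positivity),
      ← ENNReal.ofReal_sub _ (by positivity)]
    congr 1
    ring
  have hvolA : ∀ n, volume (A n) = ENNReal.ofReal (3*π*(q n)^2) * ENNReal.ofReal (3*π*(q n)^2) := by
    intro n
    rw [hAdef]
    rw [Measure.volume_eq_prod, Measure.prod_prod, hvolB]
  have hlow : ∀ n, ENNReal.ofReal (9*π^2*c) ≤ ∫⁻ z in A n, F z := by
    intro n
    have step1 : ∫⁻ _ in A n, ENNReal.ofReal (c / (q n)^4) ≤ ∫⁻ z in A n, F z := by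
      apply setLIntegral_mono' (hmeasA n)
      intro z hz
      apply ENNReal.ofReal_le_ofReal
      have h1 := (hmemB n z.1).1 hz.1
      have h2 := (hmemB n z.2).1 hz.2
      exact simanca_aux m j k hm h (q n) _ _ (hq0 n) (hq1 n) h1.2 h1.1 h2.2 h2.1
    rw [setLIntegral_const] at step1
    calc ENNReal.ofReal (9*π^2*c)
        = ENNReal.ofReal (c/(q n)^4) * volume (A n) := by
          rw [hvolA n, ← ENNReal.ofReal_mul (by positivity),
            ← ENNReal.ofReal_mul (by positivity)]
          congr 1
          have : q n ≠ 0 := (hq0 n).ne'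
          field_simp
          ring
      _ ≤ _ := step1
  have hsum : (⊤:ENNReal) ≤ ∫⁻ z in {p : ℂ × ℂ | p ≠ 0}, F z := by
    calc (⊤:ENNReal) = ∑' _ : ℕ, ENNReal.ofReal (9*π^2*c) :=
          (ENNReal.tsum_const_eq_top_of_ne_zero
            (ENNReal.ofReal_pos.2 (by positivity)).ne').symm
      _ ≤ ∑' n, ∫⁻ z in A n, F z := ENNReal.tsum_le_tsum hlow
      _ = ∫⁻ z in ⋃ n, A n, F z := (lintegral_iUnion hmeasA hdisjA F).symm
      _ ≤ _ := lintegral_mono_set hsub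
  exact top_le_iff.1 hsum
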